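/- Let c ≥ 0 and p0 ≥ c, let D : ℝ → ℝ, and D0, D1 : ℝ × ℝ → ℝ. Suppose D1 is (Fréchet) differentiable at (p0, p0), D1(p, p) = D(p) for all p, x ↦ D1(x, y) is nondecreasing for each y, y ↦ D0(x, y) is nondecreasing for each x, and ∂D0/∂y exists at (p0, p0). Then the naive profit estimator underestimates the profit treatment effect: D(p0) + (p0 − c)·(∂D1/∂y(p0, p0) − ∂D0/∂y(p0, p0)) ≤ D(p0) + (p0 − c)·D'(p0). -/

import Mathlib

open Filter Topology

lemma monotone_hasDerivAt_nonneg {f : ℝ → ℝ} {d a : ℝ}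
    (hm : Monotone f) (hd : HasDerivAt f d a) : 0 ≤ d := by
  have h := hasDerivAt_iff_tendsto_slope.1 hd
  have h' : Tendsto (slope f a) (𝓝[>] a) (𝓝 d) :=
    h.mono_left (nhdsWithin_mono _ (by intro x hx; exact ne_of_gt hx))
  refine ge_of_tendsto h' ?_
  filter_upwards [self_mem_nhdsWithin] with x hx
  rw [slope_def_field]
  exact div_nonneg (sub_nonneg.2 (hm (le_of_lt hx))) (sub_nonneg.2 (le_of_lt hx))

/-- the naive profit estimator underestimates the profit
treatment effect. -/
theorem naive_profit_estimator_underestimates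
    (c p0 : ℝ) (hc : 0 ≤ c) (hp0 : c ≤ p0)
    (D : ℝ → ℝ) (D0 D1 : ℝ × ℝ → ℝ)
    (L : ℝ × ℝ →L[ℝ] ℝ) (d0y : ℝ)
    (hD1 : HasFDerivAt D1 L (p0, p0))
    (hdiag : ∀ p : ℝ, D1 (p, p) = D p)
    (hmono1 : ∀ y : ℝ, Monotone (fun x => D1 (x, y)))
    (hmono0 : ∀ x : ℝ, Monotone (fun y => D0 (x, y)))
    (hD0 : HasDerivAt (fun y => D0 (p0, y)) d0y p0) :
    D p0 + (p0 - c) * (L (0, 1) - d0y) ≤ D p0 + (p0 - c) * deriv D p0 := by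
  -- D has derivative L(1,1) at p0
  have hline : HasDerivAt (fun p : ℝ => (p, p)) ((1 : ℝ), (1 : ℝ)) p0 := by
    exact HasDerivAt.prodMk (hasDerivAt_id p0) (hasDerivAt_id p0)
  have hD : HasDerivAt D (L (1, 1)) p0 := by
    have h2 : HasDerivAt (fun p : ℝ => D1 (p, p)) (L (1, 1)) p0 :=
      hD1.comp_hasDerivAt_of_eq p0 hline rfl
    have : (fun p : ℝ => D1 (p, p)) = D := funext hdiag
    rwa [this] at h2
  have hderiv : deriv D p0 = L (1, 1) := hD.deriv
  -- partial derivative in x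
  have hlinex : HasDerivAt (fun x : ℝ => (x, p0)) ((1 : ℝ), (0 : ℝ)) p0 :=
    HasDerivAt.prodMk (hasDerivAt_id p0) (hasDerivAt_const p0 p0)
  have hx : HasDerivAt (fun x : ℝ => D1 (x, p0)) (L (1, 0)) p0 :=
    hD1.comp_hasDerivAt_of_eq p0 hlinex rfl
  have hx0 : 0 ≤ L (1, 0) := monotone_hasDerivAt_nonneg (hmono1 p0) hx
  have hy0 : 0 ≤ d0y := monotone_hasDerivAt_nonneg (hmono0 p0) hD0
  have hsum : L ((1 : ℝ), (1 : ℝ)) = L (1, 0) + L (0, 1) := by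
    rw [← map_add]; norm_num
  have key : L (0, 1) - d0y ≤ deriv D p0 := by
    rw [hderiv, hsum]; linarith
  have := sub_nonneg.2 hp0
  nlinarith
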